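/- Let m be an even integer with m ≥ 6, let d > 0 be a real number, and let n = q·m for a positive integer q. Define the real m×m circulant matrix B by B_{j,k} = 6 + d if j = k; B_{j,k} = −4 if j ≡ k − 1 (mod m) or j ≡ k + 1 (mod m); B_{j,k} = 1 if j ≡ k − 2 (mod m) or j ≡ k + 2 (mod m); and B_{j,k} = 0 otherwise. Let U be any m×m permutation matrix and V any n×n permutation matrix, and define the m×n matrix A = U · [B B ⋯ B] · V, where [B B ⋯ B] is the horizontal concatenation of q copies of B. Then the condition number of A equals (16 + d)/d. -/

import Mathlib

open Matrix

/-- The Euclidean norm of a vector in `ℝᵏ`. -/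
noncomputable def euclNorm {k : ℕ} (v : Fin k → ℝ) : ℝ :=
  Real.sqrt (∑ i, v i ^ 2)

/-- The greatest singular value of a real `m × k` matrix `M` (`m ≤ k`):
`sup {‖Mᵀ y‖ : y ∈ ℝᵐ, ‖y‖ = 1}`. -/
noncomputable def sigmaMax {m k : ℕ} (M : Matrix (Fin m) (Fin k) ℝ) : ℝ :=
  sSup {x | ∃ y : Fin m → ℝ, euclNorm y = 1 ∧ x = euclNorm (Mᵀ.mulVec y)}

/-- The least (`m`-th greatest) singular value of a real `m × k` matrix `M`
(`m ≤ k`): `inf {‖Mᵀ y‖ : y ∈ ℝᵐ, ‖y‖ = 1}`. -/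
noncomputable def sigmaMin {m k : ℕ} (M : Matrix (Fin m) (Fin k) ℝ) : ℝ :=
  sInf {x | ∃ y : Fin m → ℝ, euclNorm y = 1 ∧ x = euclNorm (Mᵀ.mulVec y)}

/-- The condition number of a real `m × k` matrix (`m ≤ k`): the ratio of its
greatest singular value to its least singular value. -/
noncomputable def condNum {m k : ℕ} (M : Matrix (Fin m) (Fin k) ℝ) : ℝ :=
  sigmaMax M / sigmaMin M

/-- The `m × m` circulant matrix of the paper: `6 + d` on the diagonal, `-4` on
the (cyclic) first off-diagonals (`j ≡ k ± 1 (mod m)`), `1` on the (cyclic)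
second off-diagonals (`j ≡ k ± 2 (mod m)`), and `0` elsewhere. -/
noncomputable def circB (m : ℕ) (d : ℝ) : Matrix (Fin m) (Fin m) ℝ :=
  Matrix.of fun j k =>
    if (j : ℕ) = (k : ℕ) then 6 + d
    else if ((j : ℕ) + 1) % m = (k : ℕ) ∨ ((k : ℕ) + 1) % m = (j : ℕ) then -4
    else if ((j : ℕ) + 2) % m = (k : ℕ) ∨ ((k : ℕ) + 2) % m = (j : ℕ) then 1
    else 0

/-- The horizontal concatenation `[B B ⋯ B]` of copies of `circB m d`, as an
`m × n` matrix (when `n` is a multiple of `m`, column `j` of the concatenation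
is column `j mod m` of `B`). -/
noncomputable def concatB (m n : ℕ) (hm : 0 < m) (d : ℝ) :
    Matrix (Fin m) (Fin n) ℝ :=
  Matrix.of fun i j => circB m d i ⟨(j : ℕ) % m, Nat.mod_lt _ hm⟩

/-- A square `0`-`1` matrix with exactly one `1` in each row and each column. -/
def IsPermMatrix {k : ℕ} (M : Matrix (Fin k) (Fin k) ℝ) : Prop :=
  (∀ i j, M i j = 0 ∨ M i j = 1) ∧
  (∀ i, ∃! j, M i j = 1) ∧
  (∀ j, ∃! i, M i j = 1)


set_option linter.unusedSectionVars false
set_option maxHeartbeats 1000000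


section core
variable {m : ℕ} [NeZero m]

def fo (m : ℕ) (hm : 6 ≤ m) : Fin m := ⟨1, by omega⟩
def ft (m : ℕ) (hm : 6 ≤ m) : Fin m := ⟨2, by omega⟩

variable (hm : 6 ≤ m)

lemma val_add_fo (j : Fin m) : ((j + fo m hm : Fin m) : ℕ) = ((j : ℕ) + 1) % m := by
  rw [Fin.val_add]; rfl

lemma val_add_ft (j : Fin m) : ((j + ft m hm : Fin m) : ℕ) = ((j : ℕ) + 2) % m := by
  rw [Fin.val_add]; rfl

lemma val_sub_fo (j : Fin m) : ((j - fo m hm : Fin m) : ℕ) = ((j : ℕ) + (m - 1)) % m := by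
  rw [Fin.sub_def]; show (m - 1 + (j : ℕ)) % m = _; rw [Nat.add_comm]

lemma val_sub_ft (j : Fin m) : ((j - ft m hm : Fin m) : ℕ) = ((j : ℕ) + (m - 2)) % m := by
  rw [Fin.sub_def]; show (m - 2 + (j : ℕ)) % m = _; rw [Nat.add_comm]

lemma fo_ne_zero : fo m hm ≠ 0 := by
  simp only [Ne, Fin.ext_iff, fo, Fin.val_zero]; omega

lemma ft_ne_zero : ft m hm ≠ 0 := by
  simp only [Ne, Fin.ext_iff, ft, Fin.val_zero]; omega

lemma fo_ne_ft : fo m hm ≠ ft m hm := by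
  simp only [Ne, Fin.ext_iff, fo, ft]; omega

lemma fo_add_fo : fo m hm + fo m hm = ft m hm := by
  simp only [Fin.ext_iff, Fin.val_add, fo, ft]
  rw [Nat.mod_eq_of_lt (by omega)]

end core

section core2
variable {m : ℕ} [NeZero m] (hm : 6 ≤ m)

lemma fo_add_ft : (fo m hm + ft m hm : Fin m) ≠ 0 := by
  simp only [Ne, Fin.ext_iff, Fin.val_add, fo, ft, Fin.val_zero]
  rw [Nat.mod_eq_of_lt (by omega)]; omega

lemma ft_add_ft : (ft m hm + ft m hm : Fin m) ≠ 0 := by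
  simp only [Ne, Fin.ext_iff, Fin.val_add, fo, ft, Fin.val_zero]
  rw [Nat.mod_eq_of_lt (by omega)]; omega

lemma ft_ne_zero' : (fo m hm + fo m hm : Fin m) ≠ 0 := by
  rw [fo_add_fo hm]; exact ft_ne_zero hm

variable (j : Fin m)

lemma ne_a : j ≠ j + fo m hm := fun h => fo_ne_zero hm (by simpa using h.symm)
lemma ne_c : j ≠ j + ft m hm := fun h => ft_ne_zero hm (by simpa using h.symm)
lemma ne_b : j ≠ j - fo m hm := fun h => fo_ne_zero hm (by
  have h2 := congrArg (· + fo m hm) h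
  simp only [sub_add_cancel] at h2
  simpa using h2.symm)
lemma ne_d : j ≠ j - ft m hm := fun h => ft_ne_zero hm (by
  have h2 := congrArg (· + ft m hm) h
  simp only [sub_add_cancel] at h2
  simpa using h2.symm)
lemma ne_ab : j + fo m hm ≠ j - fo m hm := fun h => ft_ne_zero' hm (by
  have h2 := congrArg (· + fo m hm) h
  simp only [sub_add_cancel, add_assoc] at h2
  simpa using h2)
lemma ne_ac : j + fo m hm ≠ j + ft m hm := fun h => fo_ne_ft hm (by simpa using h)
lemma ne_ad : j + fo m hm ≠ j - ft m hm := fun h => fo_add_ft hm (by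
  have h2 := congrArg (· + ft m hm) h
  simp only [sub_add_cancel, add_assoc] at h2
  simpa using h2)
lemma ne_bc : j - fo m hm ≠ j + ft m hm := fun h => fo_add_ft hm (by
  have h2 := congrArg (· + fo m hm) h.symm
  simp only [sub_add_cancel, add_assoc] at h2
  simpa [add_comm (ft m hm) (fo m hm)] using h2
  )
lemma ne_bd : j - fo m hm ≠ j - ft m hm := fun h => fo_ne_ft hm (by
  have := sub_right_injective (G := Fin m) h; simpa using this)
lemma ne_cd : j + ft m hm ≠ j - ft m hm := fun h => ft_add_ft hm (by
  have h2 := congrArg (· + ft m hm) h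
  simp only [sub_add_cancel, add_assoc] at h2
  simpa using h2)
end core2

section core3
variable {m : ℕ} [NeZero m] (hm : 6 ≤ m)

lemma cond_one (j k : Fin m) : ((j : ℕ) + 1) % m = (k : ℕ) ↔ k = j + fo m hm := by
  rw [Fin.ext_iff, val_add_fo hm, eq_comm]

lemma cond_two (j k : Fin m) : ((j : ℕ) + 2) % m = (k : ℕ) ↔ k = j + ft m hm := by
  rw [Fin.ext_iff, val_add_ft hm, eq_comm]

lemma cond_one' (j k : Fin m) : ((k : ℕ) + 1) % m = (j : ℕ) ↔ k = j - fo m hm := by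
  rw [cond_one hm k j]
  constructor
  · intro h; rw [h]; abel
  · intro h; rw [h]; abel

lemma cond_two' (j k : Fin m) : ((k : ℕ) + 2) % m = (j : ℕ) ↔ k = j - ft m hm := by
  rw [cond_two hm k j]
  constructor
  · intro h; rw [h]; abel
  · intro h; rw [h]; abel

lemma circB_apply (d : ℝ) (j k : Fin m) :
    circB m d j k =
      if k = j then 6 + d
      else if k = j + fo m hm ∨ k = j - fo m hm then -4
      else if k = j + ft m hm ∨ k = j - ft m hm then 1
      else 0 := by
  show (if (j : ℕ) = (k : ℕ) then 6 + d
    else if ((j : ℕ) + 1) % m = (k : ℕ) ∨ ((k : ℕ) + 1) % m = (j : ℕ) then -4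
    else if ((j : ℕ) + 2) % m = (k : ℕ) ∨ ((k : ℕ) + 2) % m = (j : ℕ) then 1
    else 0) = _
  simp only [cond_one hm, cond_one' hm, cond_two hm, cond_two' hm,
    show ((j:ℕ) = (k:ℕ)) ↔ (k = j) from by rw [Fin.ext_iff, eq_comm],
    show (j = k + fo m hm) ↔ (k = j - fo m hm) from by rw [eq_sub_iff_add_eq, eq_comm],
    show (j = k + ft m hm) ↔ (k = j - ft m hm) from by rw [eq_sub_iff_add_eq, eq_comm]]

lemma circB_decomp (d : ℝ) (j k : Fin m) :
    circB m d j k =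
      (if k = j then 6 + d else 0) + (if k = j + fo m hm then -4 else 0)
      + (if k = j - fo m hm then -4 else 0) + (if k = j + ft m hm then 1 else 0)
      + (if k = j - ft m hm then 1 else 0) := by
  rw [circB_apply hm]
  by_cases h0 : k = j
  · simp [h0, fo_ne_zero hm, ft_ne_zero hm, ne_a hm j, (ne_a hm j).symm, ne_b hm j, (ne_b hm j).symm, ne_c hm j, (ne_c hm j).symm, ne_d hm j, (ne_d hm j).symm, ne_ab hm j, (ne_ab hm j).symm, ne_ac hm j, (ne_ac hm j).symm, ne_ad hm j, (ne_ad hm j).symm, ne_bc hm j, (ne_bc hm j).symm, ne_bd hm j, (ne_bd hm j).symm, ne_cd hm j, (ne_cd hm j).symm]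
  by_cases h1 : k = j + fo m hm
  · simp [h0, h1, fo_ne_zero hm, ft_ne_zero hm, ne_a hm j, (ne_a hm j).symm, ne_b hm j, (ne_b hm j).symm, ne_c hm j, (ne_c hm j).symm, ne_d hm j, (ne_d hm j).symm, ne_ab hm j, (ne_ab hm j).symm, ne_ac hm j, (ne_ac hm j).symm, ne_ad hm j, (ne_ad hm j).symm, ne_bc hm j, (ne_bc hm j).symm, ne_bd hm j, (ne_bd hm j).symm, ne_cd hm j, (ne_cd hm j).symm]
  by_cases h2 : k = j - fo m hm
  · simp [h0, h1, h2, fo_ne_zero hm, ft_ne_zero hm, ne_a hm j, (ne_a hm j).symm, ne_b hm j, (ne_b hm j).symm, ne_c hm j, (ne_c hm j).symm, ne_d hm j, (ne_d hm j).symm, ne_ab hm j, (ne_ab hm j).symm, ne_ac hm j, (ne_ac hm j).symm, ne_ad hm j, (ne_ad hm j).symm, ne_bc hm j, (ne_bc hm j).symm, ne_bd hm j, (ne_bd hm j).symm, ne_cd hm j, (ne_cd hm j).symm]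
  by_cases h3 : k = j + ft m hm
  · simp [h0, h1, h2, h3, fo_ne_zero hm, ft_ne_zero hm, ne_a hm j, (ne_a hm j).symm, ne_b hm j, (ne_b hm j).symm, ne_c hm j, (ne_c hm j).symm, ne_d hm j, (ne_d hm j).symm, ne_ab hm j, (ne_ab hm j).symm, ne_ac hm j, (ne_ac hm j).symm, ne_ad hm j, (ne_ad hm j).symm, ne_bc hm j, (ne_bc hm j).symm, ne_bd hm j, (ne_bd hm j).symm, ne_cd hm j, (ne_cd hm j).symm]
  by_cases h4 : k = j - ft m hm
  · simp [h0, h1, h2, h3, h4, fo_ne_zero hm, ft_ne_zero hm, ne_a hm j, (ne_a hm j).symm, ne_b hm j, (ne_b hm j).symm, ne_c hm j, (ne_c hm j).symm, ne_d hm j, (ne_d hm j).symm, ne_ab hm j, (ne_ab hm j).symm, ne_ac hm j, (ne_ac hm j).symm, ne_ad hm j, (ne_ad hm j).symm, ne_bc hm j, (ne_bc hm j).symm, ne_bd hm j, (ne_bd hm j).symm, ne_cd hm j, (ne_cd hm j).symm]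
  · simp [h0, h1, h2, h3, h4]

lemma circB_mulVec (d : ℝ) (w : Fin m → ℝ) (j : Fin m) :
    (circB m d *ᵥ w) j =
      (6 + d) * w j - 4 * (w (j + fo m hm) + w (j - fo m hm))
        + (w (j + ft m hm) + w (j - ft m hm)) := by
  simp only [mulVec, dotProduct]
  rw [Finset.sum_congr rfl (fun k _ => by rw [circB_decomp hm d j k])]
  simp only [add_mul, ite_mul, zero_mul, Finset.sum_add_distrib,
    Finset.sum_ite_eq', Finset.mem_univ, if_true]
  ring
end core3

section core4
variable {m : ℕ} [NeZero m] (hm : 6 ≤ m)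

lemma sum_shift (c : Fin m) (F : Fin m → ℝ) : ∑ j, F (j + c) = ∑ j, F j :=
  Fintype.sum_equiv (Equiv.addRight c) _ _ (fun _ => rfl)

lemma inner_identity (d : ℝ) (w : Fin m → ℝ) :
    ∑ j, (circB m d *ᵥ w) j * w j =
      d * ∑ j, w j ^ 2
        + ∑ j, (2 * w j - w (j + fo m hm) - w (j - fo m hm)) ^ 2 := by
  set o := fo m hm with ho
  set t := ft m hm with ht
  have hoo : ∀ j : Fin m, j + o + o = j + t := fun j => by
    rw [add_assoc, fo_add_fo hm]
  have h1 : ∑ j, w (j + o) ^ 2 = ∑ j, w j ^ 2 := sum_shift o (fun j => w j ^ 2)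
  have h2 : ∑ j, w (j - o) ^ 2 = ∑ j, w j ^ 2 := by
    have := sum_shift (-o) (fun j => w j ^ 2)
    simpa [sub_eq_add_neg] using this
  have h3 : ∑ j, w (j - o) * w j = ∑ j, w j * w (j + o) := by
    have := sum_shift o (fun j => w (j - o) * w j)
    simp only [add_sub_cancel_right] at this
    exact this.symm
  have h4 : ∑ j, w (j + o) * w j = ∑ j, w j * w (j + o) :=
    Finset.sum_congr rfl fun j _ => mul_comm _ _
  have h5 : ∑ j, w (j - t) * w j = ∑ j, w j * w (j + t) := by
    have := sum_shift t (fun j => w (j - t) * w j)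
    simp only [add_sub_cancel_right] at this
    exact this.symm
  have h6 : ∑ j, w (j + t) * w j = ∑ j, w j * w (j + t) :=
    Finset.sum_congr rfl fun j _ => mul_comm _ _
  have h7 : ∑ j, w (j + o) * w (j - o) = ∑ j, w j * w (j + t) := by
    have := sum_shift o (fun j => w (j + o) * w (j - o))
    simp only [add_sub_cancel_right, hoo] at this
    rw [← this]
    exact Finset.sum_congr rfl fun j _ => mul_comm _ _
  have E1 : ∑ j, (circB m d *ᵥ w) j * w j =
      (6 + d) * ∑ j, w j ^ 2 - 4 * ∑ j, w (j + o) * w j - 4 * ∑ j, w (j - o) * w j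
        + (∑ j, w (j + t) * w j + ∑ j, w (j - t) * w j) := by
    calc ∑ j, (circB m d *ᵥ w) j * w j
        = ∑ j, ((6 + d) * w j ^ 2 - 4 * (w (j + o) * w j) - 4 * (w (j - o) * w j)
            + (w (j + t) * w j + w (j - t) * w j)) :=
          Finset.sum_congr rfl fun j _ => by rw [circB_mulVec hm]; ring
      _ = _ := by
          simp only [Finset.sum_add_distrib, Finset.sum_sub_distrib, Finset.mul_sum]
  have E2 : ∑ j, (2 * w j - w (j + o) - w (j - o)) ^ 2 =
      4 * ∑ j, w j ^ 2 + ∑ j, w (j + o) ^ 2 + ∑ j, w (j - o) ^ 2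
        - 4 * ∑ j, w (j + o) * w j - 4 * ∑ j, w (j - o) * w j
        + 2 * ∑ j, w (j + o) * w (j - o) := by
    calc ∑ j, (2 * w j - w (j + o) - w (j - o)) ^ 2
        = ∑ j, (4 * w j ^ 2 + w (j + o) ^ 2 + w (j - o) ^ 2
            - 4 * (w (j + o) * w j) - 4 * (w (j - o) * w j)
            + 2 * (w (j + o) * w (j - o))) :=
          Finset.sum_congr rfl fun j _ => by ring
      _ = _ := by
          simp only [Finset.sum_add_distrib, Finset.sum_sub_distrib, Finset.mul_sum]
  rw [E1, E2, h1, h2, h3, h4, h5, h6, h7]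
  ring
end core4

lemma euclNorm_eq_norm {k : ℕ} (v : Fin k → ℝ) :
    euclNorm v = ‖(WithLp.equiv 2 (Fin k → ℝ)).symm v‖ := by
  rw [EuclideanSpace.norm_eq]
  simp [euclNorm, Real.norm_eq_abs, sq_abs]

lemma euclNorm_nonneg {k : ℕ} (v : Fin k → ℝ) : 0 ≤ euclNorm v := Real.sqrt_nonneg _

lemma euclNorm_comp_equiv {k : ℕ} (v : Fin k → ℝ) (e : Equiv.Perm (Fin k)) :
    euclNorm (fun i => v (e i)) = euclNorm v := by
  unfold euclNorm
  congr 1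
  exact Fintype.sum_equiv e _ _ (fun i => rfl)

lemma euclNorm_add_le {k : ℕ} (u v : Fin k → ℝ) :
    euclNorm (fun i => u i + v i) ≤ euclNorm u + euclNorm v := by
  have : (fun i => u i + v i) = u + v := rfl
  rw [this, euclNorm_eq_norm, euclNorm_eq_norm, euclNorm_eq_norm]
  rw [show (WithLp.equiv 2 (Fin k → ℝ)).symm (u + v) =
    (WithLp.equiv 2 (Fin k → ℝ)).symm u + (WithLp.equiv 2 (Fin k → ℝ)).symm v from rfl]
  exact norm_add_le _ _

lemma euclNorm_smul {k : ℕ} (c : ℝ) (v : Fin k → ℝ) :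
    euclNorm (fun i => c * v i) = |c| * euclNorm v := by
  have : (fun i => c * v i) = c • v := rfl
  rw [this, euclNorm_eq_norm, euclNorm_eq_norm]
  rw [show (WithLp.equiv 2 (Fin k → ℝ)).symm (c • v) =
    c • (WithLp.equiv 2 (Fin k → ℝ)).symm v from rfl]
  rw [norm_smul, Real.norm_eq_abs]

section core5
variable {m : ℕ} [NeZero m]

lemma euclNorm_shift (c : Fin m) (v : Fin m → ℝ) :
    euclNorm (fun j => v (j + c)) = euclNorm v := by
  unfold euclNorm
  rw [sum_shift c (fun j => v j ^ 2)]

lemma sq_sum_of_unit {k : ℕ} {v : Fin k → ℝ} (h : euclNorm v = 1) :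
    ∑ i, v i ^ 2 = 1 := by
  have := congrArg (· ^ 2) h
  simpa [euclNorm, Real.sq_sqrt (Finset.sum_nonneg fun i _ => sq_nonneg (v i))] using this

lemma lower_bound (hm : 6 ≤ m) (d : ℝ) (hd : 0 < d) (w : Fin m → ℝ) (hw : euclNorm w = 1) :
    d ≤ euclNorm (circB m d *ᵥ w) := by
  have hw2 : ∑ j, w j ^ 2 = 1 := sq_sum_of_unit hw
  have hid := inner_identity hm d w
  have hL : 0 ≤ ∑ j, (2 * w j - w (j + fo m hm) - w (j - fo m hm)) ^ 2 :=
    Finset.sum_nonneg fun j _ => sq_nonneg _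
  have hI : d ≤ ∑ j, (circB m d *ᵥ w) j * w j := by rw [hid, hw2]; linarith
  have hCS := Finset.sum_mul_sq_le_sq_mul_sq Finset.univ (fun j => (circB m d *ᵥ w) j) w
  rw [hw2, mul_one] at hCS
  have hS : 0 ≤ ∑ j, (circB m d *ᵥ w) j ^ 2 := Finset.sum_nonneg fun j _ => sq_nonneg _
  have hN : euclNorm (circB m d *ᵥ w) ^ 2 = ∑ j, (circB m d *ᵥ w) j ^ 2 := by
    simp [euclNorm, Real.sq_sqrt hS]
  nlinarith [euclNorm_nonneg (circB m d *ᵥ w)]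

lemma L_norm_le (hm : 6 ≤ m) (v : Fin m → ℝ) :
    euclNorm (fun j => 2 * v j - v (j + fo m hm) - v (j - fo m hm)) ≤ 4 * euclNorm v := by
  set o := fo m hm
  have e1 : euclNorm (fun j => v (j + o)) = euclNorm v := euclNorm_shift o v
  have e2 : euclNorm (fun j => v (j - o)) = euclNorm v := by
    have := euclNorm_shift (-o) v
    simpa [sub_eq_add_neg] using this
  calc euclNorm (fun j => 2 * v j - v (j + o) - v (j - o))
      = euclNorm (fun j => (2 * v j + (-1) * v (j + o)) + (-1) * v (j - o)) := by
        congr 1 with j; ring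
    _ ≤ euclNorm (fun j => 2 * v j + (-1) * v (j + o)) + euclNorm (fun j => (-1) * v (j - o)) :=
        euclNorm_add_le _ _
    _ ≤ (euclNorm (fun j => 2 * v j) + euclNorm (fun j => (-1) * v (j + o)))
          + euclNorm (fun j => (-1) * v (j - o)) := by
        have := euclNorm_add_le (fun j => 2 * v j) (fun j => (-1) * v (j + o))
        gcongr
    _ = 2 * euclNorm v + euclNorm v + euclNorm v := by
        rw [euclNorm_smul, euclNorm_smul, euclNorm_smul, e1, e2]
        norm_num
    _ = 4 * euclNorm v := by ring

lemma upper_bound (hm : 6 ≤ m) (d : ℝ) (hd : 0 < d) (w : Fin m → ℝ) (hw : euclNorm w = 1) :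
    euclNorm (circB m d *ᵥ w) ≤ 16 + d := by
  set o := fo m hm with ho
  set L : Fin m → ℝ := fun j => 2 * w j - w (j + o) - w (j - o) with hL
  have key : ∀ j, (circB m d *ᵥ w) j = d * w j + (2 * L j - L (j + o) - L (j - o)) := by
    intro j
    rw [circB_mulVec hm]
    simp only [hL]
    rw [add_sub_cancel_right, sub_add_cancel,
      show j + o + o = j + ft m hm from by rw [add_assoc, fo_add_fo hm],
      show j - o - o = j - ft m hm from by rw [sub_sub, fo_add_fo hm]]
    ring
  have hLn : euclNorm L ≤ 4 := by
    have := L_norm_le hm w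
    rw [hw] at this
    simpa [hL] using this
  have hLLn : euclNorm (fun j => 2 * L j - L (j + o) - L (j - o)) ≤ 16 := by
    have h2 := L_norm_le hm L
    calc euclNorm (fun j => 2 * L j - L (j + o) - L (j - o)) ≤ 4 * euclNorm L := h2
      _ ≤ 16 := by linarith
  calc euclNorm (circB m d *ᵥ w)
      = euclNorm (fun j => d * w j + (2 * L j - L (j + o) - L (j - o))) := by
        congr 1 with j; rw [key j]
    _ ≤ euclNorm (fun j => d * w j) + euclNorm (fun j => 2 * L j - L (j + o) - L (j - o)) :=
        euclNorm_add_le _ _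
    _ ≤ d * 1 + 16 := by
        have h1 : euclNorm (fun j => d * w j) = |d| * 1 := by rw [euclNorm_smul, hw]
        rw [h1, abs_of_pos hd]
        linarith
    _ = 16 + d := by ring
end core5

section eig
variable {m : ℕ} [NeZero m]

lemma even_mod_iff (hme : Even m) (a : ℕ) : Even (a % m) ↔ Even a := by
  conv_rhs => rw [← Nat.mod_add_div a m]
  rw [Nat.even_add]
  simp [hme.mul_right _]

lemma euclNorm_of_sq_const (r : ℝ) (f : Fin m → ℝ) (h : ∀ j, f j ^ 2 = r) :
    euclNorm f = Real.sqrt (m * r) := by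
  unfold euclNorm
  rw [Finset.sum_congr rfl fun j _ => h j, Finset.sum_const, Finset.card_univ,
    Fintype.card_fin, nsmul_eq_mul]

lemma m_inv_facts (hm : 6 ≤ m) :
    ((Real.sqrt m)⁻¹) ^ 2 = (m : ℝ)⁻¹ ∧ (0:ℝ) < m := by
  constructor
  · rw [← Real.sqrt_inv]
    exact Real.sq_sqrt (by positivity)
  · exact_mod_cast by omega

lemma eigen_min (hm : 6 ≤ m) (d : ℝ) (hd : 0 < d) :
    ∃ w : Fin m → ℝ, euclNorm w = 1 ∧ euclNorm (circB m d *ᵥ w) = d := by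
  obtain ⟨hc, hm0⟩ := m_inv_facts hm
  set c : ℝ := (Real.sqrt m)⁻¹ with hcdef
  refine ⟨fun _ => c, ?_, ?_⟩
  · rw [euclNorm_of_sq_const (c ^ 2) _ (fun j => rfl), hc,
      mul_inv_cancel₀ (ne_of_gt hm0), Real.sqrt_one]
  · have hBe : ∀ j, (circB m d *ᵥ (fun _ => c)) j = d * c := fun j => by
      rw [circB_mulVec hm]; ring
    rw [euclNorm_of_sq_const ((d * c) ^ 2) _ (fun j => by rw [hBe j])]
    rw [mul_pow, hc, mul_comm, mul_assoc, inv_mul_cancel₀ (ne_of_gt hm0), mul_one,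
      Real.sqrt_sq hd.le]

lemma eigen_max (hm : 6 ≤ m) (hme : Even m) (d : ℝ) (hd : 0 < d) :
    ∃ w : Fin m → ℝ, euclNorm w = 1 ∧ euclNorm (circB m d *ᵥ w) = 16 + d := by
  obtain ⟨hc, hm0⟩ := m_inv_facts hm
  set c : ℝ := (Real.sqrt m)⁻¹ with hcdef
  set w : Fin m → ℝ := fun j => if Even (j : ℕ) then c else -c with hwdef
  have hsq : ∀ j, w j ^ 2 = c ^ 2 := fun j => by
    by_cases h : Even (j : ℕ) <;> simp [hwdef, h]
  have hop : ∀ j : Fin m, w (j + fo m hm) = -w j := by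
    intro j
    have hv : ((j + fo m hm : Fin m) : ℕ) = ((j : ℕ) + 1) % m := val_add_fo hm j
    by_cases h : Even (j : ℕ)
    · have : ¬ Even (((j : ℕ) + 1) % m) := by
        rw [even_mod_iff hme]; simp [Nat.even_add_one, h]
      simp [hwdef, hv, this, h]
    · have : Even (((j : ℕ) + 1) % m) := by
        rw [even_mod_iff hme]; simp [Nat.even_add_one, h]
      simp [hwdef, hv, this, h]
  have hom : ∀ j : Fin m, w (j - fo m hm) = -w j := by
    intro j
    have hv : ((j - fo m hm : Fin m) : ℕ) = ((j : ℕ) + (m - 1)) % m := val_sub_fo hm j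
    have hodd : ¬ Even (m - 1) := by
      rcases hme with ⟨p, hp⟩
      rintro ⟨r, hr⟩; omega
    by_cases h : Even (j : ℕ)
    · have : ¬ Even (((j : ℕ) + (m - 1)) % m) := by
        rw [even_mod_iff hme, Nat.even_add]; simp [h, hodd]
      simp [hwdef, hv, this, h]
    · have : Even (((j : ℕ) + (m - 1)) % m) := by
        rw [even_mod_iff hme, Nat.even_add]; simp [h, hodd]
      simp [hwdef, hv, this, h]
  have htp : ∀ j : Fin m, w (j + ft m hm) = w j := by
    intro j
    have hv : ((j + ft m hm : Fin m) : ℕ) = ((j : ℕ) + 2) % m := val_add_ft hm j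
    have h2 : Even (((j : ℕ) + 2) % m) ↔ Even (j : ℕ) := by
      rw [even_mod_iff hme, Nat.even_add]
      simp
    by_cases h : Even (j : ℕ) <;> simp [hwdef, hv, h2, h]
  have htm : ∀ j : Fin m, w (j - ft m hm) = w j := by
    intro j
    have hv : ((j - ft m hm : Fin m) : ℕ) = ((j : ℕ) + (m - 2)) % m := val_sub_ft hm j
    have heven : Even (m - 2) := by
      rcases hme with ⟨p, hp⟩
      exact ⟨p - 1, by omega⟩
    have h2 : Even (((j : ℕ) + (m - 2)) % m) ↔ Even (j : ℕ) := by
      rw [even_mod_iff hme, Nat.even_add]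
      simp [heven]
    by_cases h : Even (j : ℕ) <;> simp [hwdef, hv, h2, h]
  have hBe : ∀ j, (circB m d *ᵥ w) j = (16 + d) * w j := fun j => by
    rw [circB_mulVec hm, hop j, hom j, htp j, htm j]; ring
  refine ⟨w, ?_, ?_⟩
  · rw [euclNorm_of_sq_const (c ^ 2) _ hsq, hc,
      mul_inv_cancel₀ (ne_of_gt hm0), Real.sqrt_one]
  · rw [euclNorm_of_sq_const (((16 + d)) ^ 2 * c ^ 2) _
      (fun j => by rw [hBe j, mul_pow, hsq j])]
    rw [hc, show (m : ℝ) * ((16 + d) ^ 2 * (m : ℝ)⁻¹) = (16 + d) ^ 2 by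
      field_simp]
    rw [Real.sqrt_sq (by linarith)]
end eig

section concat
variable {m : ℕ} [NeZero m]

lemma circB_symm (hm : 6 ≤ m) (d : ℝ) (j k : Fin m) :
    circB m d j k = circB m d k j := by
  rw [circB_decomp hm d j k, circB_decomp hm d k j]
  have e0 : (j = k) ↔ (k = j) := eq_comm
  have e1 : (j = k + fo m hm) ↔ (k = j - fo m hm) := by
    rw [eq_sub_iff_add_eq, eq_comm]
  have e2 : (j = k - fo m hm) ↔ (k = j + fo m hm) := by
    rw [eq_sub_iff_add_eq, eq_comm]
  have e3 : (j = k + ft m hm) ↔ (k = j - ft m hm) := by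
    rw [eq_sub_iff_add_eq, eq_comm]
  have e4 : (j = k - ft m hm) ↔ (k = j + ft m hm) := by
    rw [eq_sub_iff_add_eq, eq_comm]
  simp only [e0, e1, e2, e3, e4]
  ring

lemma concat_norm (hm : 6 ≤ m) (h0 : 0 < m) {q n : ℕ} (hn : n = q * m) (d : ℝ)
    (w : Fin m → ℝ) :
    euclNorm ((concatB m n h0 d)ᵀ *ᵥ w) =
      Real.sqrt q * euclNorm (circB m d *ᵥ w) := by
  have hentry : ∀ j : Fin n,
      ((concatB m n h0 d)ᵀ *ᵥ w) j =
        (circB m d *ᵥ w) ⟨(j : ℕ) % m, Nat.mod_lt _ h0⟩ := by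
    intro j
    simp only [mulVec, dotProduct, transpose_apply, concatB, Matrix.of_apply]
    exact Finset.sum_congr rfl fun i _ => by
      rw [circB_symm hm d i ⟨(j : ℕ) % m, Nat.mod_lt _ h0⟩]
  set G : ℕ → ℝ := fun a => ((circB m d *ᵥ w) ⟨a % m, Nat.mod_lt _ h0⟩) ^ 2 with hG
  have periodic : ∀ k : ℕ, ∑ a ∈ Finset.range (k * m), G a
      = k * ∑ a ∈ Finset.range m, G a := by
    intro k
    induction k with
    | zero => simp
    | succ k ih =>
      have hsplit : (k + 1) * m = k * m + m := by ring
      rw [hsplit, Finset.range_eq_Ico,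
        ← Finset.sum_Ico_consecutive G (Nat.zero_le (k * m)) (Nat.le_add_right _ m),
        ← Finset.range_eq_Ico, ih, Finset.sum_Ico_eq_sum_range]
      have : ∀ a, G (k * m + a) = G a := by
        intro a
        have hidx : (k * m + a) % m = a % m := by
          rw [Nat.mul_comm k m]; exact Nat.mul_add_mod m k a
        simp only [hG, hidx]
      rw [Nat.add_sub_cancel_left,
        Finset.sum_congr rfl fun a _ => this a]
      push_cast
      ring
  have hsum : ∑ j : Fin n, (((concatB m n h0 d)ᵀ *ᵥ w) j) ^ 2
      = q * ∑ i : Fin m, ((circB m d *ᵥ w) i) ^ 2 := by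
    calc ∑ j : Fin n, (((concatB m n h0 d)ᵀ *ᵥ w) j) ^ 2
        = ∑ j : Fin n, G (j : ℕ) := Finset.sum_congr rfl fun j _ => by rw [hentry j]
      _ = ∑ a ∈ Finset.range n, G a := Fin.sum_univ_eq_sum_range G n
      _ = q * ∑ a ∈ Finset.range m, G a := by rw [hn, periodic q]
      _ = q * ∑ i : Fin m, ((circB m d *ᵥ w) i) ^ 2 := by
          congr 1
          rw [← Fin.sum_univ_eq_sum_range G m]
          exact Finset.sum_congr rfl fun i _ => by
            simp only [hG, Nat.mod_eq_of_lt i.isLt]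
  unfold euclNorm
  rw [hsum, Real.sqrt_mul (by positivity)]
end concat


lemma IsPermMatrix.exists_equiv {k : ℕ} {M : Matrix (Fin k) (Fin k) ℝ}
    (h : IsPermMatrix M) : ∃ σ : Equiv.Perm (Fin k), ∀ i j, M i j = if σ i = j then 1 else 0 := by
  obtain ⟨h01, hrow, hcol⟩ := h
  choose f hf hf' using hrow
  have hinj : Function.Injective f := by
    intro a b hab
    obtain ⟨g, hg, hg'⟩ := hcol (f a)
    have ha := hg' a (hf a)
    have hb := hg' b (hab ▸ hf b)
    rw [ha, hb]
  refine ⟨Equiv.ofBijective f (Finite.injective_iff_bijective.mp hinj), fun i j => ?_⟩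
  simp only [Equiv.ofBijective_apply]
  by_cases hij : f i = j
  · simpa [hij] using hij ▸ hf i
  · rcases h01 i j with h0 | h1
    · simp [h0, hij]
    · exact absurd ((hf' i j h1).symm) hij

lemma IsPermMatrix.mulVec_eq {k : ℕ} {M : Matrix (Fin k) (Fin k) ℝ}
    (σ : Equiv.Perm (Fin k)) (hσ : ∀ i j, M i j = if σ i = j then 1 else 0)
    (v : Fin k → ℝ) : M.mulVec v = fun i => v (σ i) := by
  funext i
  simp only [mulVec, dotProduct, hσ]
  simp [Finset.sum_ite_eq, Finset.mem_univ]

lemma IsPermMatrix.transpose_mulVec_eq {k : ℕ} {M : Matrix (Fin k) (Fin k) ℝ}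
    (σ : Equiv.Perm (Fin k)) (hσ : ∀ i j, M i j = if σ i = j then 1 else 0)
    (v : Fin k → ℝ) : Mᵀ.mulVec v = fun j => v (σ.symm j) := by
  funext j
  simp only [mulVec, dotProduct, transpose_apply, hσ]
  rw [Finset.sum_eq_single (σ.symm j)]
  · simp
  · intro b _ hb
    rw [if_neg, zero_mul]
    intro hc
    exact hb (by simp [← hc])
  · simp

lemma IsPermMatrix.transpose_mul_self {k : ℕ} {M : Matrix (Fin k) (Fin k) ℝ}
    (σ : Equiv.Perm (Fin k)) (hσ : ∀ i j, M i j = if σ i = j then 1 else 0) :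
    Mᵀ * M = 1 := by
  ext a b
  simp only [Matrix.mul_apply, transpose_apply, hσ]
  rw [Finset.sum_eq_single (σ.symm a)]
  · simp [Matrix.one_apply]
  · intro c _ hc
    rw [if_neg, zero_mul]
    intro h; exact hc (by simp [← h])
  · simp


/-- For even `m ≥ 6`, `d > 0`, and `n = q·m` with `q ≥ 1`, and any
permutation matrices `U` (`m × m`) and `V` (`n × n`), the condition number of
`A = U · [B B ⋯ B] · V` equals `(16 + d) / d`. -/
theorem stmt_19 (m q n : ℕ) (hm : 6 ≤ m) (hme : Even m) (hq : 0 < q)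
    (hn : n = q * m) (d : ℝ) (hd : 0 < d)
    (U : Matrix (Fin m) (Fin m) ℝ) (hU : IsPermMatrix U)
    (V : Matrix (Fin n) (Fin n) ℝ) (hV : IsPermMatrix V)
    (A : Matrix (Fin m) (Fin n) ℝ)
    (hA : A = U * concatB m n (by omega) d * V) :
    condNum A = (16 + d) / d := by
  haveI : NeZero m := ⟨by omega⟩
  have h0 : 0 < m := by omega
  obtain ⟨σ, hσ⟩ := hU.exists_equiv
  obtain ⟨τ, hτ⟩ := hV.exists_equiv
  have hqpos : (0:ℝ) < Real.sqrt q := Real.sqrt_pos.mpr (by exact_mod_cast hq)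
  have hcompute : ∀ y : Fin m → ℝ,
      euclNorm (Aᵀ *ᵥ y) = Real.sqrt q * euclNorm (circB m d *ᵥ (Uᵀ *ᵥ y)) := by
    intro y
    rw [hA, Matrix.transpose_mul, Matrix.transpose_mul, ← Matrix.mulVec_mulVec,
      IsPermMatrix.transpose_mulVec_eq τ hτ, euclNorm_comp_equiv, ← Matrix.mulVec_mulVec]
    exact concat_norm hm h0 hn d (Uᵀ *ᵥ y)
  have key : {x | ∃ y : Fin m → ℝ, euclNorm y = 1 ∧ x = euclNorm (Aᵀ *ᵥ y)} =
      {x | ∃ w : Fin m → ℝ, euclNorm w = 1 ∧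
        x = Real.sqrt q * euclNorm (circB m d *ᵥ w)} := by
    ext x
    simp only [Set.mem_setOf_eq]
    constructor
    · rintro ⟨y, hy, rfl⟩
      refine ⟨Uᵀ *ᵥ y, ?_, hcompute y⟩
      rw [IsPermMatrix.transpose_mulVec_eq σ hσ]
      exact (euclNorm_comp_equiv y σ.symm).trans hy
    · rintro ⟨w, hw, rfl⟩
      refine ⟨fun i => w (σ i), (euclNorm_comp_equiv w σ).trans hw, ?_⟩
      have hUw : Uᵀ *ᵥ (fun i => w (σ i)) = w := by
        rw [IsPermMatrix.transpose_mulVec_eq σ hσ]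
        funext j
        simp
      rw [hcompute, hUw]
  have hmax : sigmaMax A = Real.sqrt q * (16 + d) := by
    unfold sigmaMax
    rw [key]
    apply IsGreatest.csSup_eq
    constructor
    · obtain ⟨w, hw1, hw2⟩ := eigen_max hm hme d hd
      exact ⟨w, hw1, by rw [hw2]⟩
    · rintro x ⟨w, hw, rfl⟩
      exact mul_le_mul_of_nonneg_left (upper_bound hm d hd w hw) hqpos.le
  have hmin : sigmaMin A = Real.sqrt q * d := by
    unfold sigmaMin
    rw [key]
    apply IsLeast.csInf_eq
    constructor
    · obtain ⟨w, hw1, hw2⟩ := eigen_min hm d hd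
      exact ⟨w, hw1, by rw [hw2]⟩
    · rintro x ⟨w, hw, rfl⟩
      exact mul_le_mul_of_nonneg_left (lower_bound hm d hd w hw) hqpos.le
  rw [condNum, hmax, hmin, mul_div_mul_left _ _ (ne_of_gt hqpos)]
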